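/- Let n = sm with m odd, and let F be a polynomial with coefficients in F_{2^s} which, as a function on F_{2^n}, is differentially 4-uniform (i.e., for all nonzero a and all b in F_{2^n}, the equation F(x+a)+F(x)=b has at most 4 solutions). Then for every a in F_{2^s} with a ≠ 0 and every b in F_{2^s}, the equation F(x+a)+F(x)=b has no solution x in F_{2^n} \ F_{2^s}. -/
import Mathlib

section Aux
variable {K : Type*} [Field K] [CharP K 2]

private lemma pp (y : K) (u v : ℕ) : (y ^ 2 ^ u) ^ 2 ^ v = y ^ 2 ^ (u + v) := by
  rw [← pow_mul, ← pow_add]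

private lemma addpow (u v : K) (t : ℕ) : (u + v) ^ 2 ^ t = u ^ 2 ^ t + v ^ 2 ^ t :=
  add_pow_char_pow u v 2 t

private lemma fixiter {c : K} {s : ℕ} (hc : c ^ 2 ^ s = c) (k : ℕ) : c ^ 2 ^ (s * k) = c := by
  induction k with
  | zero => simp
  | succ k ih => rw [Nat.mul_succ, ← pp, ih, hc]

private lemma keyA (s m d : ℕ) (hm : Odd m) (x c : K)
    (hx : x ^ 2 ^ (s * m) = x) (hc : c ^ 2 ^ s = c) (hrel : x ^ 2 ^ (s * d) = x + c) :
    c = 0 := by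
  have hcd : c ^ 2 ^ (s * d) = c := fixiter hc d
  have even : ∀ k : ℕ, x ^ 2 ^ (s * d * (2 * k)) = x := by
    intro k
    induction k with
    | zero => simp
    | succ k ih =>
      rw [show s * d * (2 * (k + 1)) = s * d * (2 * k) + s * d + s * d by ring,
        ← pp, ← pp, ih, hrel, addpow, hrel, hcd, add_assoc, CharTwo.add_self_eq_zero, add_zero]
  obtain ⟨t, ht⟩ := hm
  have h1 : x ^ 2 ^ (s * m * d) = x := fixiter hx d
  have h2 : x ^ 2 ^ (s * m * d) = x + c := by
    rw [show s * m * d = s * d * (2 * t) + s * d by rw [ht]; ring, ← pp, even t, hrel]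
  rw [h1] at h2
  exact (left_eq_add.mp h2)

private lemma keyC (s m : ℕ) (hm : Odd m) (x : K)
    (hx : x ^ 2 ^ (s * m) = x) (h2 : x ^ 2 ^ (s * 2) = x) : x ^ 2 ^ s = x := by
  have even : ∀ k : ℕ, x ^ 2 ^ (s * (2 * k)) = x := by
    intro k
    induction k with
    | zero => simp
    | succ k ih =>
      rw [show s * (2 * (k + 1)) = s * (2 * k) + s * 2 by ring, ← pp, ih, h2]
  obtain ⟨t, ht⟩ := hm
  rw [show s * m = s * (2 * t) + s by rw [ht]; ring, ← pp, even t] at hx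
  exact hx

private lemma keyB (s m i j : ℕ) (hm : Odd m) (hi : i ≤ m) (x aa : K)
    (hx : x ^ 2 ^ (s * m) = x) (ha : aa ^ 2 ^ s = aa)
    (hrel : x ^ 2 ^ (s * i) = x ^ 2 ^ (s * j) + aa) : aa = 0 := by
  obtain ⟨r, hr⟩ := Nat.exists_eq_add_of_le hi
  have e1 : (x ^ 2 ^ (s * i)) ^ 2 ^ (s * r) = x := by
    rw [pp, show s * i + s * r = s * m by rw [hr]; ring, hx]
  have e3 : x = x ^ 2 ^ (s * (j + r)) + aa := by
    conv_lhs => rw [← e1, hrel]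
    rw [addpow, pp, show s * j + s * r = s * (j + r) by ring, fixiter ha r]
  have two0 : (2 : K) = 0 := CharTwo.two_eq_zero
  have e4 : x ^ 2 ^ (s * (j + r)) = x + aa := by linear_combination -e3 - aa * two0
  exact keyA s m (j + r) hm x aa hx ha e4

private lemma frobinj (s : ℕ) (x y : K) (h : x ^ 2 ^ s = y ^ 2 ^ s) : x = y := by
  have h0 : (x + y) ^ 2 ^ s = 0 := by
    rw [addpow, h, CharTwo.add_self_eq_zero]
  have := pow_eq_zero_iff (pow_ne_zero s two_ne_zero) |>.mp h0
  rw [← CharTwo.sub_eq_add] at this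
  exact sub_eq_zero.mp this

end Aux

/-- If `F` has coefficients in `𝔽_{2^s}` (equivalently, commutes with the
Frobenius `x ↦ x^{2^s}`) and is differentially 4-uniform over `𝔽_{2^n}`, `n = s·m`, `m` odd,
then for `a ∈ 𝔽_{2^s}*`, `b ∈ 𝔽_{2^s}`, every solution of `F(x+a)+F(x)=b` lies in `𝔽_{2^s}`.
Membership in `𝔽_{2^s}` is expressed by `x ^ 2 ^ s = x`. -/
theorem stmt_0 (s m n : ℕ) (hs : 0 < s) (hm : Odd m) (hn : n = s * m)
    (F : GaloisField 2 n → GaloisField 2 n)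
    (hcoef : ∀ x : GaloisField 2 n, F (x ^ 2 ^ s) = F x ^ 2 ^ s)
    (hdu : ∀ a b : GaloisField 2 n, a ≠ 0 →
      Nat.card {x : GaloisField 2 n // F (x + a) + F x = b} ≤ 4)
    (a b : GaloisField 2 n) (ha : a ^ 2 ^ s = a) (ha0 : a ≠ 0) (hb : b ^ 2 ^ s = b) :
    ∀ x : GaloisField 2 n, F (x + a) + F x = b → x ^ 2 ^ s = x := by
  classical
  intro x hsol
  have hn0 : n ≠ 0 := by
    have := Nat.mul_pos hs hm.pos
    omega
  have hcardpow : ∀ y : GaloisField 2 n, y ^ 2 ^ n = y := by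
    haveI : Fintype (GaloisField 2 n) := Fintype.ofFinite _
    intro y
    have hcard : Fintype.card (GaloisField 2 n) = 2 ^ n := by
      rw [← Nat.card_eq_fintype_card]
      exact GaloisField.card 2 n hn0
    rw [← hcard]
    exact FiniteField.pow_card y
  by_cases hm1 : m = 1
  · have hfix := hcardpow x
    rw [show (2:ℕ) ^ s = 2 ^ n by rw [hn, hm1, mul_one]]
    exact hfix
  have hm3 : 3 ≤ m := by
    obtain ⟨t, ht⟩ := hm
    omega
  by_contra hne
  have hx : x ^ 2 ^ (s * m) = x := by rw [← hn]; exact hcardpow x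
  -- closure of the solution set
  have hfrob : ∀ y : GaloisField 2 n, F (y + a) + F y = b →
      F (y ^ 2 ^ s + a) + F (y ^ 2 ^ s) = b := by
    intro y hy
    have hya : y ^ 2 ^ s + a = (y + a) ^ 2 ^ s := by rw [addpow, ha]
    rw [hya, hcoef, hcoef, ← addpow, hy, hb]
  have htrans : ∀ y : GaloisField 2 n, F (y + a) + F y = b →
      F ((y + a) + a) + F (y + a) = b := by
    intro y hy
    rw [add_assoc, CharTwo.add_self_eq_zero, add_zero, add_comm]
    exact hy
  -- the six solutions
  have hsol1 : F (x ^ 2 ^ s + a) + F (x ^ 2 ^ s) = b := hfrob x hsol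
  have hx2 : x ^ 2 ^ (s * 2) = (x ^ 2 ^ s) ^ 2 ^ s := by
    rw [pp, show s + s = s * 2 by ring]
  have hsol2 : F (x ^ 2 ^ (s * 2) + a) + F (x ^ 2 ^ (s * 2)) = b := by
    rw [hx2]; exact hfrob _ hsol1
  have hsol3 := htrans x hsol
  have hsol4 := htrans _ hsol1
  have hsol5 := htrans _ hsol2
  -- distinctness facts
  have key : ∀ i j : ℕ, i ≤ m → ¬ (x ^ 2 ^ (s * i) = x ^ 2 ^ (s * j) + a) := by
    intro i j hi h
    exact ha0 (keyB s m i j hm hi x a hx ha h)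
  have n01 : x ≠ x ^ 2 ^ s := fun h => hne h.symm
  have n02 : x ≠ x ^ 2 ^ (s * 2) := fun h => hne (keyC s m hm x hx h.symm)
  have n12 : x ^ 2 ^ s ≠ x ^ 2 ^ (s * 2) := by
    intro h
    rw [hx2] at h
    exact n01 (frobinj s x (x ^ 2 ^ s) h)
  have n03 : x ≠ x + a := fun h => ha0 (left_eq_add.mp h)
  have n04 : x ≠ x ^ 2 ^ s + a := fun h => key 0 1 (by omega) (by simpa using h)
  have n05 : x ≠ x ^ 2 ^ (s * 2) + a := fun h => key 0 2 (by omega) (by simpa using h)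
  have n13 : x ^ 2 ^ s ≠ x + a := fun h => key 1 0 (by omega) (by simpa using h)
  have n14 : x ^ 2 ^ s ≠ x ^ 2 ^ s + a := fun h => key 1 1 (by omega) (by simpa using h)
  have n15 : x ^ 2 ^ s ≠ x ^ 2 ^ (s * 2) + a := fun h => key 1 2 (by omega) (by simpa using h)
  have n23 : x ^ 2 ^ (s * 2) ≠ x + a := fun h => key 2 0 (by omega) (by simpa using h)
  have n24 : x ^ 2 ^ (s * 2) ≠ x ^ 2 ^ s + a := fun h => key 2 1 (by omega) (by simpa using h)
  have n25 : x ^ 2 ^ (s * 2) ≠ x ^ 2 ^ (s * 2) + a := fun h => key 2 2 (by omega) (by simpa using h)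
  have n34 : x + a ≠ x ^ 2 ^ s + a := fun h => n01 (add_right_cancel h)
  have n35 : x + a ≠ x ^ 2 ^ (s * 2) + a := fun h => n02 (add_right_cancel h)
  have n45 : x ^ 2 ^ s + a ≠ x ^ 2 ^ (s * 2) + a := fun h => n12 (add_right_cancel h)
  -- six-element finset of solutions
  set T : Finset (GaloisField 2 n) :=
    {x, x ^ 2 ^ s, x ^ 2 ^ (s * 2), x + a, x ^ 2 ^ s + a, x ^ 2 ^ (s * 2) + a} with hT
  have hTcard : T.card = 6 := by
    rw [hT]
    rw [Finset.card_insert_of_notMem (by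
      simp only [Finset.mem_insert, Finset.mem_singleton]
      push_neg
      exact ⟨n01, n02, n03, n04, n05⟩)]
    rw [Finset.card_insert_of_notMem (by
      simp only [Finset.mem_insert, Finset.mem_singleton]
      push_neg
      exact ⟨n12, n13, n14, n15⟩)]
    rw [Finset.card_insert_of_notMem (by
      simp only [Finset.mem_insert, Finset.mem_singleton]
      push_neg
      exact ⟨n23, n24, n25⟩)]
    rw [Finset.card_insert_of_notMem (by
      simp only [Finset.mem_insert, Finset.mem_singleton]
      push_neg
      exact ⟨n34, n35⟩)]
    rw [Finset.card_insert_of_notMem (by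
      simp only [Finset.mem_singleton]
      exact n45)]
    simp
  have hsub : (↑T : Set (GaloisField 2 n)) ⊆ {y | F (y + a) + F y = b} := by
    intro y hy
    simp only [hT, Finset.coe_insert, Finset.coe_singleton, Set.mem_insert_iff,
      Set.mem_singleton_iff] at hy
    rcases hy with rfl | rfl | rfl | rfl | rfl | rfl <;> assumption
  have hle : (↑T : Set (GaloisField 2 n)).ncard ≤
      ({y | F (y + a) + F y = b} : Set (GaloisField 2 n)).ncard :=
    Set.ncard_le_ncard hsub (Set.toFinite _)
  rw [Set.ncard_coe_finset, hTcard] at hle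
  have hcardeq : Nat.card {y : GaloisField 2 n // F (y + a) + F y = b} =
      ({y | F (y + a) + F y = b} : Set (GaloisField 2 n)).ncard :=
    Nat.card_coe_set_eq _
  have := hdu a b ha0
  omega
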